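/- There exists a ℂ-linear homeomorphism K × K ≅ K, where K = ℂ((t)) carries its t-adic topology and K × K the product topology; i.e. K ⊕ K ≅ K as topological ℂ-vector spaces. -/

import Mathlib

open HahnSeries LaurentSeries Multiplicative Filter

noncomputable section LaurentProdAux

/-- The order embedding `n ↦ 2n`. -/
private def e2 : ℤ ↪o ℤ := OrderEmbedding.ofStrictMono (fun n => 2 * n) (fun a b h => by simp only []; omega)

/-- The order embedding `n ↦ 2n + 1`. -/
private def o2 : ℤ ↪o ℤ :=
  OrderEmbedding.ofStrictMono (fun n => 2 * n + 1) (fun a b h => by simp only []; omega)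

private lemma e2_apply (n : ℤ) : e2 n = 2 * n := rfl
private lemma o2_apply (n : ℤ) : o2 n = 2 * n + 1 := rfl

/-- The interleaving map `(f, g) ↦ f(t²) + t·g(t²)`. -/
private def Fmap : (LaurentSeries ℂ × LaurentSeries ℂ) →ₗ[ℂ] LaurentSeries ℂ :=
  (HahnSeries.embDomainLinearMap e2).comp (LinearMap.fst ℂ _ _) +
  (HahnSeries.embDomainLinearMap o2).comp (LinearMap.snd ℂ _ _)

private lemma Fmap_apply (p : LaurentSeries ℂ × LaurentSeries ℂ) :
    Fmap p = HahnSeries.embDomain e2 p.1 + HahnSeries.embDomain o2 p.2 := rfl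

private lemma Fmap_coeff_even (p : LaurentSeries ℂ × LaurentSeries ℂ) (k : ℤ) :
    (Fmap p).coeff (2 * k) = p.1.coeff k := by
  have h1 : (HahnSeries.embDomain e2 p.1).coeff (2 * k) = p.1.coeff k := by
    rw [← e2_apply]; exact HahnSeries.embDomain_coeff
  have h2 : (HahnSeries.embDomain o2 p.2).coeff (2 * k) = 0 := by
    apply HahnSeries.embDomain_notin_range
    rintro ⟨m, hm⟩
    rw [o2_apply] at hm; omega
  rw [Fmap_apply, HahnSeries.coeff_add, h1, h2, add_zero]

private lemma Fmap_coeff_odd (p : LaurentSeries ℂ × LaurentSeries ℂ) (k : ℤ) :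
    (Fmap p).coeff (2 * k + 1) = p.2.coeff k := by
  have h1 : (HahnSeries.embDomain o2 p.2).coeff (2 * k + 1) = p.2.coeff k := by
    rw [← o2_apply]; exact HahnSeries.embDomain_coeff
  have h2 : (HahnSeries.embDomain e2 p.1).coeff (2 * k + 1) = 0 := by
    apply HahnSeries.embDomain_notin_range
    rintro ⟨m, hm⟩
    rw [e2_apply] at hm; omega
  rw [Fmap_apply, HahnSeries.coeff_add, h1, h2, zero_add]

/-- Even part of a Laurent series. -/
private def evenPart (h : LaurentSeries ℂ) : LaurentSeries ℂ :=
  HahnSeries.ofSuppBddBelow (fun k => h.coeff (2 * k))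
    ⟨min h.order 0, by
      intro k hk
      have h1 : h.order ≤ 2 * k := by
        by_contra hlt
        exact hk (HahnSeries.coeff_eq_zero_of_lt_order (not_le.mp hlt))
      omega⟩

/-- Odd part of a Laurent series. -/
private def oddPart (h : LaurentSeries ℂ) : LaurentSeries ℂ :=
  HahnSeries.ofSuppBddBelow (fun k => h.coeff (2 * k + 1))
    ⟨min h.order 0 - 1, by
      intro k hk
      have h1 : h.order ≤ 2 * k + 1 := by
        by_contra hlt
        exact hk (HahnSeries.coeff_eq_zero_of_lt_order (not_le.mp hlt))
      omega⟩

private lemma evenPart_coeff (h : LaurentSeries ℂ) (k : ℤ) :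
    (evenPart h).coeff k = h.coeff (2 * k) := rfl

private lemma oddPart_coeff (h : LaurentSeries ℂ) (k : ℤ) :
    (oddPart h).coeff k = h.coeff (2 * k + 1) := rfl

private lemma Fmap_leftInv (p : LaurentSeries ℂ × LaurentSeries ℂ) :
    (evenPart (Fmap p), oddPart (Fmap p)) = p := by
  refine Prod.ext ?_ ?_ <;> ext k
  · rw [evenPart_coeff, Fmap_coeff_even]
  · rw [oddPart_coeff, Fmap_coeff_odd]

private lemma Fmap_rightInv (h : LaurentSeries ℂ) :
    Fmap (evenPart h, oddPart h) = h := by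
  ext n
  rcases Int.even_or_odd n with ⟨k, hk⟩ | ⟨k, hk⟩
  · have hn : n = 2 * k := by omega
    rw [hn, Fmap_coeff_even, evenPart_coeff]
  · rw [hk, Fmap_coeff_odd, oddPart_coeff]

/-- Basic neighborhoods of zero. -/
private lemma ball_mem_nhds (D : ℤ) :
    {x : LaurentSeries ℂ | Valued.v x ≤ ((ofAdd (-D) : Multiplicative ℤ) : WithZero (Multiplicative ℤ))} ∈
      nhds (0 : LaurentSeries ℂ) := by
  obtain ⟨y, hy⟩ := LaurentSeries.valuation_surjective ℂ (WithZero.exp (-D))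
  have hr : Valued.v.restrict y ≠ 0 := by
    rw [← pos_iff_ne_zero, Valuation.restrict_pos_iff, hy]
    exact pos_iff_ne_zero.mpr WithZero.coe_ne_zero
  have hopen := Valued.isOpen_closedBall (LaurentSeries ℂ) hr
  refine Filter.mem_of_superset (hopen.mem_nhds ?_) ?_
  · show Valued.v.restrict (0 : LaurentSeries ℂ) ≤ _
    simp
  · intro x hx
    show Valued.v x ≤ WithZero.exp (-D)
    rw [← hy]
    simpa using hx

private lemma Fmap_tendsto_zero :
    Tendsto Fmap (nhds (0 : LaurentSeries ℂ × LaurentSeries ℂ)) (nhds 0) := by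
  intro s hs
  rw [Valued.mem_nhds_zero (Γ₀ := WithZero (Multiplicative ℤ))] at hs
  obtain ⟨γ, hγ⟩ := hs
  simp_rw [Valuation.restrict_lt_iff_lt_embedding] at hγ
  obtain ⟨a, ha⟩ := WithZero.ne_zero_iff_exists.mp
    (show MonoidWithZeroHom.ValueGroup₀.embedding γ.1 ≠ 0 by simp)
  set D : ℤ := max (1 - toAdd a) 1 with hD
  rw [Filter.mem_map]
  have hsub : ({x : LaurentSeries ℂ | Valued.v x ≤ ((ofAdd (-D) : Multiplicative ℤ) : WithZero (Multiplicative ℤ))} ×ˢ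
      {x : LaurentSeries ℂ | Valued.v x ≤ ((ofAdd (-D) : Multiplicative ℤ) : WithZero (Multiplicative ℤ))}) ⊆
      Fmap ⁻¹' s := by
    rintro ⟨f, g⟩ ⟨hf, hg⟩
    apply hγ
    have hf' := (LaurentSeries.valuation_le_iff_coeff_lt_eq_zero ℂ).mp hf
    have hg' := (LaurentSeries.valuation_le_iff_coeff_lt_eq_zero ℂ).mp hg
    have hval : Valued.v (Fmap (f, g)) ≤ ((ofAdd (-(2 * D)) : Multiplicative ℤ) : WithZero (Multiplicative ℤ)) := by
      apply (LaurentSeries.valuation_le_iff_coeff_lt_eq_zero ℂ).mpr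
      intro n hn
      rcases Int.even_or_odd n with ⟨k, hk⟩ | ⟨k, hk⟩
      · have hn' : n = 2 * k := by omega
        rw [hn', Fmap_coeff_even]
        exact hf' k (by omega)
      · rw [hk, Fmap_coeff_odd]
        exact hg' k (by omega)
    refine lt_of_le_of_lt hval ?_
    rw [← ha, WithZero.coe_lt_coe, ← toAdd_lt, toAdd_ofAdd]
    omega
  exact Filter.mem_of_superset
    (prod_mem_nhds (ball_mem_nhds D) (ball_mem_nhds D)) hsub

private lemma tendsto_of_coeff_bound (G : LaurentSeries ℂ → LaurentSeries ℂ)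
    (hG : ∀ (D : ℤ) (h : LaurentSeries ℂ),
      Valued.v h ≤ ((ofAdd (-(2 * D)) : Multiplicative ℤ) : WithZero (Multiplicative ℤ)) →
      Valued.v (G h) ≤ ((ofAdd (-D) : Multiplicative ℤ) : WithZero (Multiplicative ℤ))) :
    Tendsto G (nhds 0) (nhds (0 : LaurentSeries ℂ)) := by
  intro s hs
  rw [Valued.mem_nhds_zero (Γ₀ := WithZero (Multiplicative ℤ))] at hs
  obtain ⟨γ, hγ⟩ := hs
  simp_rw [Valuation.restrict_lt_iff_lt_embedding] at hγ
  obtain ⟨a, ha⟩ := WithZero.ne_zero_iff_exists.mp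
    (show MonoidWithZeroHom.ValueGroup₀.embedding γ.1 ≠ 0 by simp)
  set D : ℤ := max (1 - toAdd a) 1 with hD
  rw [Filter.mem_map]
  refine Filter.mem_of_superset (ball_mem_nhds (2 * D)) ?_
  intro h hh
  apply hγ
  refine lt_of_le_of_lt (hG D h hh) ?_
  rw [← ha, WithZero.coe_lt_coe, ← toAdd_lt, toAdd_ofAdd]
  omega

private lemma Gmap_tendsto_zero :
    Tendsto (fun h : LaurentSeries ℂ => (evenPart h, oddPart h)) (nhds 0)
      (nhds (0 : LaurentSeries ℂ × LaurentSeries ℂ)) := by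
  have he : Tendsto evenPart (nhds 0) (nhds (0 : LaurentSeries ℂ)) := by
    apply tendsto_of_coeff_bound
    intro D h hh
    have hh' := (LaurentSeries.valuation_le_iff_coeff_lt_eq_zero ℂ).mp hh
    apply (LaurentSeries.valuation_le_iff_coeff_lt_eq_zero ℂ).mpr
    intro k hk
    rw [evenPart_coeff]
    exact hh' (2 * k) (by omega)
  have ho : Tendsto oddPart (nhds 0) (nhds (0 : LaurentSeries ℂ)) := by
    apply tendsto_of_coeff_bound
    intro D h hh
    have hh' := (LaurentSeries.valuation_le_iff_coeff_lt_eq_zero ℂ).mp hh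
    apply (LaurentSeries.valuation_le_iff_coeff_lt_eq_zero ℂ).mpr
    intro k hk
    rw [oddPart_coeff]
    exact hh' (2 * k + 1) (by omega)
  exact he.prodMk_nhds ho

end LaurentProdAux

/-- `K ⊕ K ≅ K` as topological ℂ-vector spaces, where `K = ℂ((t))` carries the t-adic
topology (from its `Valued` instance) and `K × K` the product topology. -/
theorem laurentSeries_prod_homeomorph_self :
    Nonempty ((LaurentSeries ℂ × LaurentSeries ℂ) ≃L[ℂ] LaurentSeries ℂ) := by
  have hbij : Function.Bijective Fmap :=
    ⟨Function.LeftInverse.injective (g := fun h => (evenPart h, oddPart h)) Fmap_leftInv,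
     Function.RightInverse.surjective (g := fun h => (evenPart h, oddPart h)) Fmap_rightInv⟩
  let eqv := LinearEquiv.ofBijective Fmap hbij
  have hsymm : ⇑eqv.symm = fun h => (evenPart h, oddPart h) := by
    funext h
    apply eqv.injective
    rw [LinearEquiv.apply_symm_apply]
    exact (Fmap_rightInv h).symm
  refine ⟨⟨eqv, ?_, ?_⟩⟩
  · exact continuous_of_continuousAt_zero Fmap (by
      simpa [ContinuousAt, map_zero] using Fmap_tendsto_zero)
  · apply continuous_of_continuousAt_zero eqv.symm.toLinearMap
    have : ContinuousAt (fun h : LaurentSeries ℂ => (evenPart h, oddPart h)) 0 := by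
      have h0 : evenPart 0 = 0 := by ext k; rw [evenPart_coeff]; rfl
      have h1 : oddPart 0 = 0 := by ext k; rw [oddPart_coeff]; rfl
      simpa [ContinuousAt, h0, h1, Prod.mk_zero_zero] using Gmap_tendsto_zero
    simpa [ContinuousAt, map_zero, hsymm,
      (congrFun hsymm 0).symm.trans (map_zero eqv.symm)] using this
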